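/- For every α ∈ (0,1)∪(1,∞), the two-parameter Rényi conditional entropy at β = 1 equals Arimoto's Rényi conditional entropy: H̃_{α,1}(X|Y) = H*_α(X|Y), i.e. (α/(1−α)) · log( Σ_{y: P_Y(y)>0} P_Y(y) (Σ_x P_{X|Y}(x|y)^α)^{1/α} ) = − min_{Q_Y ∈ 𝒫(𝒴)} D_α(P_XY ‖ 𝟙_𝒳 × Q_Y), where the minimum is over all probability distributions Q_Y on 𝒴 and 𝟙_𝒳 × Q_Y denotes the nonnegative function (x,y) ↦ Q_Y(y) on 𝒳×𝒴. -/

import Mathlib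

open scoped BigOperators

noncomputable section

variable {𝓧 𝓨 : Type*} [Fintype 𝓧] [Fintype 𝓨]

/-- Marginal distribution of the second component. -/
def pY (P : 𝓧 × 𝓨 → ℝ) (y : 𝓨) : ℝ := ∑ x, P (x, y)

/-- Conditional distribution `P_{X|Y}(x|y)`. -/
def pCond (P : 𝓧 × 𝓨 → ℝ) (x : 𝓧) (y : 𝓨) : ℝ := P (x, y) / pY P y

/-- Two-parameter Rényi conditional entropy `H̃_{α,β}(X|Y)`. -/
def Htilde (P : 𝓧 × 𝓨 → ℝ) (α β : ℝ) : ℝ :=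
  α / (β * (1 - α)) *
    Real.logb 2 (∑ y, if 0 < pY P y then
      pY P y * (∑ x, pCond P x y ^ α) ^ (β / α) else 0)

/-- Order-`α` Rényi divergence of a probability distribution `P` with respect to a
nonnegative function `Q`, with the convention that it is `+∞` when `α > 1` and `P`
is not absolutely continuous with respect to `Q`. -/
def renyiDiv {𝓩 : Type*} [Fintype 𝓩] (α : ℝ) (P Q : 𝓩 → ℝ) : EReal :=
  if 1 < α ∧ ∃ z, Q z = 0 ∧ P z ≠ 0 then ⊤
  else ((1 / (α - 1)) *
    Real.logb 2 (∑ z, if 0 < P z then P z ^ α * Q z ^ (1 - α) else 0) : ℝ)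

/-- Hölder-type inequality: `∑ aᵢ^θ bᵢ^(1-θ) ≤ (∑ aᵢ)^θ (∑ bᵢ)^(1-θ)`. -/
lemma hoelder_sum {ι : Type*} [Fintype ι] (a b : ι → ℝ) (ha : ∀ i, 0 ≤ a i)
    (hb : ∀ i, 0 ≤ b i) (θ : ℝ) (hθ : 0 < θ) (hθ1 : θ < 1) :
    ∑ i, a i ^ θ * b i ^ (1 - θ) ≤ (∑ i, a i) ^ θ * (∑ i, b i) ^ (1 - θ) := by
  have hθ1' : (0:ℝ) < 1 - θ := by linarith
  set A := ∑ i, a i with hA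
  set B := ∑ i, b i with hB
  have hA0 : 0 ≤ A := Finset.sum_nonneg fun i _ => ha i
  have hB0 : 0 ≤ B := Finset.sum_nonneg fun i _ => hb i
  rcases hA0.eq_or_lt with hA0' | hApos
  · have hz : ∀ i ∈ Finset.univ, a i = 0 :=
      (Finset.sum_eq_zero_iff_of_nonneg (fun i _ => ha i)).mp hA0'.symm
    have h1 : ∑ i, a i ^ θ * b i ^ (1 - θ) = 0 :=
      Finset.sum_eq_zero fun i _ => by
        rw [hz i (Finset.mem_univ i), Real.zero_rpow hθ.ne', zero_mul]
    rw [h1, ← hA0', Real.zero_rpow hθ.ne', zero_mul]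
  rcases hB0.eq_or_lt with hB0' | hBpos
  · have hz : ∀ i ∈ Finset.univ, b i = 0 :=
      (Finset.sum_eq_zero_iff_of_nonneg (fun i _ => hb i)).mp hB0'.symm
    have h1 : ∑ i, a i ^ θ * b i ^ (1 - θ) = 0 :=
      Finset.sum_eq_zero fun i _ => by
        rw [hz i (Finset.mem_univ i), Real.zero_rpow hθ1'.ne', mul_zero]
    rw [h1, ← hB0', Real.zero_rpow hθ1'.ne', mul_zero]
  have hAp : 0 < A ^ θ := Real.rpow_pos_of_pos hApos θ
  have hBp : 0 < B ^ (1 - θ) := Real.rpow_pos_of_pos hBpos (1 - θ)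
  have key : ∀ i, a i ^ θ * b i ^ (1 - θ) ≤
      (θ * (a i / A) + (1 - θ) * (b i / B)) * (A ^ θ * B ^ (1 - θ)) := by
    intro i
    have h := Real.geom_mean_le_arith_mean2_weighted hθ.le hθ1'.le
      (div_nonneg (ha i) hA0) (div_nonneg (hb i) hB0) (by ring)
    have heq : a i ^ θ * b i ^ (1 - θ) =
        ((a i / A) ^ θ * (b i / B) ^ (1 - θ)) * (A ^ θ * B ^ (1 - θ)) := by
      rw [Real.div_rpow (ha i) hA0, Real.div_rpow (hb i) hB0]
      field_simp
    rw [heq]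
    exact mul_le_mul_of_nonneg_right h (by positivity)
  calc ∑ i, a i ^ θ * b i ^ (1 - θ)
      ≤ ∑ i, (θ * (a i / A) + (1 - θ) * (b i / B)) * (A ^ θ * B ^ (1 - θ)) :=
        Finset.sum_le_sum fun i _ => key i
    _ = (∑ i, (θ * (a i / A) + (1 - θ) * (b i / B))) * (A ^ θ * B ^ (1 - θ)) := by
        rw [Finset.sum_mul]
    _ = A ^ θ * B ^ (1 - θ) := by
        have : ∑ i, (θ * (a i / A) + (1 - θ) * (b i / B)) = 1 := by
          rw [Finset.sum_add_distrib]
          simp_rw [mul_div_assoc']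
          rw [← Finset.sum_div, ← Finset.sum_div, ← Finset.mul_sum, ← Finset.mul_sum,
            ← hA, ← hB, mul_div_assoc, mul_div_assoc, div_self hApos.ne', div_self hBpos.ne']
          ring
        rw [this, one_mul]

/-- `H̃_{α,1}(X|Y) = H*_α(X|Y)`, Arimoto's Rényi conditional entropy. -/
theorem Htilde_beta_one_eq_arimoto
    [Nonempty 𝓧] [Nonempty 𝓨]
    (P : 𝓧 × 𝓨 → ℝ) (hP : ∀ p, 0 ≤ P p) (hPsum : ∑ p, P p = 1)
    (α : ℝ) (hα : 0 < α) (hα1 : α ≠ 1) :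
    (Htilde P α 1 : EReal) =
      - ⨅ Q : {Q : 𝓨 → ℝ // (∀ y, 0 ≤ Q y) ∧ ∑ y, Q y = 1},
          renyiDiv α P (fun p : 𝓧 × 𝓨 => Q.1 p.2) := by
  classical
  have hα0 : α ≠ 0 := hα.ne'
  have hα0' : (1:ℝ)/α ≠ 0 := one_div_ne_zero hα0
  set c : 𝓨 → ℝ := fun y => ∑ x, P (x, y) ^ α with hc
  have hc0 : ∀ y, 0 ≤ c y := fun y =>
    Finset.sum_nonneg fun x _ => Real.rpow_nonneg (hP _) α
  have hpY0 : ∀ y, 0 ≤ pY P y := fun y => Finset.sum_nonneg fun x _ => hP _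
  have hpC0 : ∀ x y, 0 ≤ pCond P x y := fun x y => div_nonneg (hP _) (hpY0 y)
  have hPzero : ∀ x y, pY P y = 0 → P (x, y) = 0 := fun x y h =>
    (Finset.sum_eq_zero_iff_of_nonneg (fun x _ => hP (x, y))).mp h x (Finset.mem_univ x)
  have hczero : ∀ y, pY P y = 0 → c y = 0 := fun y h =>
    Finset.sum_eq_zero fun x _ => by rw [hPzero x y h, Real.zero_rpow hα0]
  have hcPle : ∀ z : 𝓧 × 𝓨, P z ^ α ≤ c z.2 := by
    intro z
    have := Finset.single_le_sum (f := fun x => P (x, z.2) ^ α)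
      (fun x _ => Real.rpow_nonneg (hP _) α) (Finset.mem_univ z.1)
    simpa using this
  have hkey : ∀ y, c y ^ ((1:ℝ)/α) = pY P y * (∑ x, pCond P x y ^ α) ^ ((1:ℝ)/α) := by
    intro y
    rcases (hpY0 y).eq_or_lt with h0 | h0
    · rw [hczero y h0.symm, Real.zero_rpow hα0', ← h0, zero_mul]
    · have hcy : c y = pY P y ^ α * ∑ x, pCond P x y ^ α := by
        rw [Finset.mul_sum]
        refine Finset.sum_congr rfl fun x _ => ?_
        rw [pCond, ← Real.mul_rpow (hpY0 y) (div_nonneg (hP _) (hpY0 y)),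
          mul_div_cancel₀ _ h0.ne']
      rw [hcy, Real.mul_rpow (Real.rpow_nonneg (hpY0 y) α)
        (Finset.sum_nonneg fun x _ => Real.rpow_nonneg (hpC0 x y) α),
        ← Real.rpow_mul (hpY0 y), mul_one_div, div_self hα0, Real.rpow_one]
  set S : ℝ := ∑ y, c y ^ ((1:ℝ)/α) with hS
  have hS0 : ∀ y, 0 ≤ c y ^ ((1:ℝ)/α) := fun y => Real.rpow_nonneg (hc0 y) _
  obtain ⟨p0, hp0⟩ : ∃ p, 0 < P p := by
    by_contra h
    push_neg at h
    have : ∑ p, P p = 0 := Finset.sum_eq_zero fun p _ => le_antisymm (h p) (hP p)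
    rw [this] at hPsum; norm_num at hPsum
  have hcp : 0 < c p0.2 := lt_of_lt_of_le (Real.rpow_pos_of_pos hp0 α) (hcPle p0)
  have hSpos : 0 < S := by
    have h1 : c p0.2 ^ ((1:ℝ)/α) ≤ S :=
      Finset.single_le_sum (f := fun y => c y ^ ((1:ℝ)/α)) (fun y _ => hS0 y)
        (Finset.mem_univ p0.2)
    have h2 : 0 < c p0.2 ^ ((1:ℝ)/α) := Real.rpow_pos_of_pos hcp _
    linarith
  have hHt : Htilde P α 1 = α / (1 - α) * Real.logb 2 S := by
    rw [Htilde, one_mul]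
    congr 2
    refine Finset.sum_congr rfl fun y _ => ?_
    split_ifs with h
    · exact (hkey y).symm
    · have h0 : pY P y = 0 := le_antisymm (not_lt.mp h) (hpY0 y)
      rw [hczero y h0, Real.zero_rpow hα0']
  set Dstar : ℝ := α / (α - 1) * Real.logb 2 S with hD
  have h1α : (1:ℝ) - α ≠ 0 := sub_ne_zero.mpr (Ne.symm hα1)
  have hα1' : α - 1 ≠ 0 := sub_ne_zero.mpr hα1
  have hHneg : Htilde P α 1 = -Dstar := by
    rw [hHt, hD, show (1:ℝ) - α = -(α-1) from (neg_sub α 1).symm, div_neg, neg_mul]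
  have hlogSα : Real.logb 2 (S ^ α) = α * Real.logb 2 S := by
    rw [Real.logb, Real.logb, Real.log_rpow hSpos, mul_div_assoc]
  have hT : ∀ Q : 𝓨 → ℝ,
      (∑ z : 𝓧 × 𝓨, if 0 < P z then P z ^ α * Q z.2 ^ (1 - α) else 0) =
      ∑ y, c y * Q y ^ (1 - α) := by
    intro Q
    rw [Fintype.sum_prod_type, Finset.sum_comm]
    refine Finset.sum_congr rfl fun y _ => ?_
    rw [hc]
    dsimp only
    rw [Finset.sum_mul]
    refine Finset.sum_congr rfl fun x _ => ?_
    rcases (hP (x, y)).eq_or_lt with h | h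
    · rw [if_neg (by rw [← h]; exact lt_irrefl 0), ← h, Real.zero_rpow hα0, zero_mul]
    · rw [if_pos h]
  have hInf : (⨅ Q : {Q : 𝓨 → ℝ // (∀ y, 0 ≤ Q y) ∧ ∑ y, Q y = 1},
      renyiDiv α P (fun p : 𝓧 × 𝓨 => Q.1 p.2)) = (Dstar : EReal) := by
    apply le_antisymm
    · set Qs : 𝓨 → ℝ := fun y => c y ^ ((1:ℝ)/α) / S with hQs
      have hQs0 : ∀ y, 0 ≤ Qs y := fun y => div_nonneg (hS0 y) hSpos.le
      have hQs1 : ∑ y, Qs y = 1 := by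
        rw [hQs]
        dsimp only
        rw [← Finset.sum_div, ← hS, div_self hSpos.ne']
      refine iInf_le_of_le ⟨Qs, hQs0, hQs1⟩ ?_
      have hne : ¬(1 < α ∧ ∃ z : 𝓧 × 𝓨, Qs z.2 = 0 ∧ P z ≠ 0) := by
        rintro ⟨-, z, hz0, hzP⟩
        have hcz : c z.2 ^ ((1:ℝ)/α) = 0 :=
          (div_eq_zero_iff.mp hz0).resolve_right hSpos.ne'
        have hcz0 : c z.2 = 0 := (Real.rpow_eq_zero (hc0 z.2) hα0').mp hcz
        have hPz : 0 < P z := (hP z).lt_of_ne' hzP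
        have h2 : 0 < P z ^ α := Real.rpow_pos_of_pos hPz α
        have := hcPle z
        rw [hcz0] at this; linarith
      rw [renyiDiv, if_neg hne, hT Qs]
      have hsum : ∑ y, c y * Qs y ^ (1 - α) = S ^ α := by
        have hstep : ∀ y, c y * Qs y ^ (1 - α) = c y ^ ((1:ℝ)/α) * S ^ (α - 1) := by
          intro y
          rw [hQs]
          dsimp only
          rw [Real.div_rpow (hS0 y) hSpos.le, div_eq_mul_inv,
            ← Real.rpow_neg hSpos.le, neg_sub]
          rcases (hc0 y).eq_or_lt with h0 | h0
          · simp only [← h0, Real.zero_rpow hα0', zero_mul]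
          · rw [← Real.rpow_mul (hc0 y), ← mul_assoc]
            congr 1
            calc c y * c y ^ ((1/α) * (1 - α))
                = c y ^ (1:ℝ) * c y ^ ((1/α) * (1 - α)) := by rw [Real.rpow_one]
              _ = c y ^ (1 + (1/α) * (1 - α)) := (Real.rpow_add h0 _ _).symm
              _ = c y ^ ((1:ℝ)/α) := by
                  congr 1
                  field_simp
                  ring
        calc ∑ y, c y * Qs y ^ (1 - α)
            = ∑ y, c y ^ ((1:ℝ)/α) * S ^ (α - 1) :=
              Finset.sum_congr rfl fun y _ => hstep y
          _ = S * S ^ (α - 1) := by rw [← Finset.sum_mul, ← hS]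
          _ = S ^ (1 + (α - 1)) := by
              rw [Real.rpow_add hSpos, Real.rpow_one]
          _ = S ^ α := by norm_num
      rw [hsum]
      apply EReal.coe_le_coe_iff.mpr
      rw [hlogSα, hD]
      ring_nf
      exact le_refl _
    · refine le_iInf fun Q => ?_
      obtain ⟨Q, hQ0, hQ1⟩ := Q
      rw [renyiDiv]
      split_ifs with htop
      · exact le_top
      · dsimp only
        rw [EReal.coe_le_coe_iff, hT Q]
        set T := ∑ y, c y * Q y ^ (1 - α) with hTdef
        have hT0 : 0 ≤ T := Finset.sum_nonneg fun y _ =>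
          mul_nonneg (hc0 y) (Real.rpow_nonneg (hQ0 y) _)
        rcases lt_or_gt_of_ne hα1 with hlt | hgt
        · -- α < 1
          have hTle : T ≤ S ^ α := by
            have hstep : ∀ y, c y * Q y ^ (1 - α) =
                (c y ^ ((1:ℝ)/α)) ^ α * Q y ^ (1 - α) := fun y => by
              rw [← Real.rpow_mul (hc0 y), one_div, inv_mul_cancel₀ hα0, Real.rpow_one]
            calc T = ∑ y, (c y ^ ((1:ℝ)/α)) ^ α * Q y ^ (1 - α) :=
                  Finset.sum_congr rfl fun y _ => hstep y
              _ ≤ (∑ y, c y ^ ((1:ℝ)/α)) ^ α * (∑ y, Q y) ^ (1 - α) :=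
                  hoelder_sum _ _ (fun y => hS0 y) hQ0 α hα hlt
              _ = S ^ α := by rw [hQ1, Real.one_rpow, mul_one, ← hS]
          have hS1 : 1 ≤ S := by
            have hpYsum : ∑ y, pY P y = 1 := by
              rw [← hPsum, Fintype.sum_prod_type, Finset.sum_comm]
              rfl
            rw [← hpYsum, hS]
            refine Finset.sum_le_sum fun y _ => ?_
            rcases (hpY0 y).eq_or_lt with h0 | h0
            · rw [← h0]; exact hS0 y
            · rw [hkey y]
              have hcond1 : ∑ x, pCond P x y = 1 := by
                simp_rw [pCond]
                rw [← Finset.sum_div]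
                exact div_self h0.ne'
              have hcondα : 1 ≤ ∑ x, pCond P x y ^ α := by
                rw [← hcond1]
                refine Finset.sum_le_sum fun x _ => ?_
                rcases (hpC0 x y).eq_or_lt with hpc | hpc
                · rw [← hpc, Real.zero_rpow hα0]
                · have hle1 : pCond P x y ≤ 1 := by
                    rw [pCond, div_le_one h0]
                    have := Finset.single_le_sum (f := fun x => P (x, y))
                      (fun x _ => hP (x, y)) (Finset.mem_univ x)
                    exact this
                  calc pCond P x y = pCond P x y ^ (1:ℝ) := (Real.rpow_one _).symm
                    _ ≤ pCond P x y ^ α :=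
                        Real.rpow_le_rpow_of_exponent_ge hpc hle1 hlt.le
              have h1le : 1 ≤ (∑ x, pCond P x y ^ α) ^ ((1:ℝ)/α) :=
                Real.one_le_rpow hcondα (by positivity)
              exact le_mul_of_one_le_right h0.le h1le
          have hlogS : 0 ≤ Real.logb 2 S := Real.logb_nonneg one_lt_two hS1
          have hcoef : 1/(α-1) < 0 :=
            div_neg_of_pos_of_neg one_pos (by linarith)
          rcases hT0.eq_or_lt with hT0' | hTpos
          · rw [← hT0', Real.logb_zero, mul_zero, hD]
            have hαneg : α/(α-1) ≤ 0 :=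
              le_of_lt (div_neg_of_pos_of_neg hα (by linarith))
            exact mul_nonpos_iff.mpr (Or.inr ⟨hαneg, hlogS⟩)
          · have hlog : Real.logb 2 T ≤ Real.logb 2 (S ^ α) :=
              (Real.logb_le_logb one_lt_two hTpos (Real.rpow_pos_of_pos hSpos α)).mpr hTle
            calc Dstar = (1/(α-1)) * Real.logb 2 (S ^ α) := by rw [hlogSα, hD]; ring
              _ ≤ (1/(α-1)) * Real.logb 2 T := mul_le_mul_of_nonpos_left hlog hcoef.le
        · -- 1 < α
          have habs : ∀ z : 𝓧 × 𝓨, Q z.2 = 0 → P z = 0 := by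
            intro z h
            by_contra hne
            exact htop ⟨hgt, z, h, hne⟩
          have hθ : (0:ℝ) < 1/α := by positivity
          have hθ1 : (1:ℝ)/α < 1 := by rw [div_lt_one hα]; exact hgt
          have hSle : S ≤ T ^ ((1:ℝ)/α) := by
            have hident : ∀ y, c y ^ ((1:ℝ)/α) =
                (c y * Q y ^ (1 - α)) ^ ((1:ℝ)/α) * Q y ^ (1 - 1/α) := by
              intro y
              rcases (hQ0 y).eq_or_lt with h0 | h0
              · have hcy : c y = 0 := Finset.sum_eq_zero fun x _ => by
                  rw [habs (x, y) h0.symm, Real.zero_rpow hα0]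
                rw [hcy, ← h0, Real.zero_rpow hα0', Real.zero_rpow
                  (by intro hcon; apply hα1; linarith : (1:ℝ) - α ≠ 0),
                  mul_zero, Real.zero_rpow hα0', zero_mul]
              · rw [Real.mul_rpow (hc0 y) (Real.rpow_nonneg h0.le _),
                  ← Real.rpow_mul h0.le, mul_assoc, ← Real.rpow_add h0]
                have : (1 - α) * (1/α) + (1 - 1/α) = 0 := by field_simp; ring
                rw [this, Real.rpow_zero, mul_one]
            calc S = ∑ y, (c y * Q y ^ (1 - α)) ^ ((1:ℝ)/α) * Q y ^ (1 - 1/α) := by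
                  rw [hS]; exact Finset.sum_congr rfl fun y _ => hident y
              _ ≤ (∑ y, c y * Q y ^ (1 - α)) ^ ((1:ℝ)/α) * (∑ y, Q y) ^ (1 - 1/α) :=
                  hoelder_sum _ _ (fun y => mul_nonneg (hc0 y)
                    (Real.rpow_nonneg (hQ0 y) _)) hQ0 _ hθ hθ1
              _ = T ^ ((1:ℝ)/α) := by rw [hQ1, Real.one_rpow, mul_one, ← hTdef]
          have hTpos : 0 < T := by
            rcases hT0.eq_or_lt with h0 | h0
            · exfalso
              rw [← h0, Real.zero_rpow hα0'] at hSle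
              linarith
            · exact h0
          have hSαT : S ^ α ≤ T := by
            calc S ^ α ≤ (T ^ ((1:ℝ)/α)) ^ α :=
                Real.rpow_le_rpow hSpos.le hSle hα.le
              _ = T := by
                rw [← Real.rpow_mul hT0, one_div, inv_mul_cancel₀ hα0, Real.rpow_one]
          have hlog : Real.logb 2 (S ^ α) ≤ Real.logb 2 T :=
            (Real.logb_le_logb one_lt_two (Real.rpow_pos_of_pos hSpos α) hTpos).mpr hSαT
          have hcoef : (0:ℝ) ≤ 1/(α-1) := le_of_lt (div_pos one_pos (by linarith))
          calc Dstar = (1/(α-1)) * Real.logb 2 (S ^ α) := by rw [hlogSα, hD]; ring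
            _ ≤ (1/(α-1)) * Real.logb 2 T := mul_le_mul_of_nonneg_left hlog hcoef
  rw [hInf, hHneg, EReal.coe_neg]
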